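/- Let ω ∈ Ω_n and let μ, α, β ∈ K_n satisfy β(x)[μ(x) − μ(ω_{|x|−1})] δ_{x, ω_{|x|}} + α(x) μ(x) = 0 for all x ∈ Q_n (with μ(ω_0) := 0). If for some k with 1 ≤ k ≤ n one has μ(ω_k) = 0 and β(ω_j) ≠ 0 for all 2 ≤ j ≤ k, then μ(ω_j) = 0 for all 1 ≤ j ≤ k. In particular, if β vanishes nowhere on the path and μ(ω_1) ≠ 0, then μ(ω_k) ≠ 0 for every k; hence any β ∈ K_n for which such an α can exist for arbitrary μ must satisfy β(x) = 0 whenever μ(x) = 0. -/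

import Mathlib

attribute [local instance] Classical.propDecidable

/-- A pre-causet: a finite set `Fin card` endowed with an irreflexive,
transitive (causal order) relation. -/
structure PreCauset where
  card : ℕ
  rel : Fin card → Fin card → Prop
  irrefl : ∀ a, ¬ rel a a
  trans : ∀ a b c, rel a b → rel b c → rel a c

/-- Order isomorphism of pre-causets. -/
def PreCauset.Iso (x y : PreCauset) : Prop :=
  ∃ e : Fin x.card ≃ Fin y.card, ∀ a b, x.rel a b ↔ y.rel (e a) (e b)

/-- `y` is produced from `x` (an offspring of `x`) if `y` is obtained from `x`
by adjoining a single new element that is maximal in `y`. -/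
def PreCauset.Offspring (x y : PreCauset) : Prop :=
  y.card = x.card + 1 ∧
    ∃ e : Fin x.card → Fin y.card, Function.Injective e ∧
      (∀ a b, x.rel a b ↔ y.rel (e a) (e b)) ∧
      (∀ c, c ∉ Set.range e → ∀ d, ¬ y.rel c d)

/-- A causal set (causet): a finite partially ordered set considered up to
order isomorphism. -/
def Causet : Type := Quot PreCauset.Iso

/-- The cardinality `|x|` of a causet. -/
def Causet.card : Causet → ℕ :=
  Quot.lift PreCauset.card fun _ _ h => by
    obtain ⟨e, -⟩ := h
    simpa using Fintype.card_congr e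

/-- The offspring (production) relation `x → y` on causets. -/
def Causet.Offspring (x y : Causet) : Prop :=
  ∃ a b : PreCauset, Quot.mk PreCauset.Iso a = x ∧ Quot.mk PreCauset.Iso b = y ∧
    a.Offspring b

/-- `Q n`: the collection of causets `x` with `1 ≤ |x| ≤ n`. -/
def Causet.Q (n : ℕ) : Type := {x : Causet // 1 ≤ x.card ∧ x.card ≤ n}

/-- The cardinality of an element of `Q n`. -/
def Causet.Q.card {n : ℕ} (x : Causet.Q n) : ℕ := x.val.card

/-- A path in `Q n`: a finite sequence `ω = ω₁ ω₂ ⋯ ωₙ` with `ω_j ∈ Q n`,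
`|ω_j| = j` and `ω_j → ω_{j+1}` for `1 ≤ j ≤ n-1` (0-indexed internally). -/
structure CausetPath (n : ℕ) where
  toFun : Fin n → Causet.Q n
  card_eq : ∀ j : Fin n, (toFun j).card = j.val + 1
  offspring : ∀ (j : ℕ) (h : j + 1 < n),
    Causet.Offspring (toFun ⟨j, Nat.lt_of_succ_lt h⟩).val (toFun ⟨j + 1, h⟩).val

/-- `ω.nth k` is `some ω_k` for `1 ≤ k ≤ n`, and `none` for the undefined
symbol `ω_0` (or any out-of-range index). -/
def CausetPath.nth {n : ℕ} (ω : CausetPath n) (k : ℕ) : Option (Causet.Q n) :=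
  if h : 1 ≤ k ∧ k ≤ n then some (ω.toFun ⟨k - 1, by omega⟩) else none

/-- Evaluation of `f ∈ K_n` with the convention `f(ω_0) := 0`. -/
def evalO {n : ℕ} (f : Causet.Q n → ℂ) : Option (Causet.Q n) → ℂ
  | some x => f x
  | none => 0

/-- Evaluation of `f ∈ L_n` with the convention that any term involving the
undefined symbols `ω_0` or `ω′_0` is `0`. -/
def evalO2 {n : ℕ} (f : Causet.Q n → Causet.Q n → ℂ) :
    Option (Causet.Q n) → Option (Causet.Q n) → ℂ
  | some x, some y => f x y
  | _, _ => 0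

/-- The Kronecker delta `δ_{x, ω_{|x|}}`. -/
noncomputable def pathDelta {n : ℕ} (ω : CausetPath n) (x : Causet.Q n) : ℂ :=
  if ω.nth x.card = some x then 1 else 0

/-- The difference operator `△_ω f (x) = [f(x) - f(ω_{|x|-1})] δ_{x, ω_{|x|}}`. -/
noncomputable def diffOp {n : ℕ} (ω : CausetPath n) (f : Causet.Q n → ℂ) :
    Causet.Q n → ℂ :=
  fun x => (f x - evalO f (ω.nth (x.card - 1))) * pathDelta ω x

/-- The bidifference operator
`△_{ω,ω′} f (x,y) = [f(x,y) - f(ω_{|x|-1}, ω′_{|y|-1})] δ_{x,ω_{|x|}} δ_{y,ω′_{|y|}}`. -/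
noncomputable def bidiffOp {n : ℕ} (ω ω' : CausetPath n)
    (f : Causet.Q n → Causet.Q n → ℂ) : Causet.Q n → Causet.Q n → ℂ :=
  fun x y =>
    (f x y - evalO2 f (ω.nth (x.card - 1)) (ω'.nth (y.card - 1))) *
      pathDelta ω x * pathDelta ω' y

/-- The Christoffel symbols `α_ω(x) = [μ(ω_{|x|-1}) - μ(x)] δ_{x, ω_{|x|}}`. -/
noncomputable def alphaOp {n : ℕ} (ω : CausetPath n) (μ : Causet.Q n → ℂ)
    (x : Causet.Q n) : ℂ :=
  (evalO μ (ω.nth (x.card - 1)) - μ x) * pathDelta ω x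

/-- The covariant difference operator `∇_ω = μ △_ω + α_ω`. -/
noncomputable def covDiffOp {n : ℕ} (ω : CausetPath n) (μ f : Causet.Q n → ℂ) :
    Causet.Q n → ℂ :=
  fun x => μ x * diffOp ω f x + alphaOp ω μ x * f x

/-- The Christoffel symbols
`α_{ω,ω′}(x,y) = [D(ω_{|x|-1}, ω′_{|y|-1}) - D(x,y)] δ_{x,ω_{|x|}} δ_{y,ω′_{|y|}}`. -/
noncomputable def alpha2Op {n : ℕ} (ω ω' : CausetPath n)
    (D : Causet.Q n → Causet.Q n → ℂ) (x y : Causet.Q n) : ℂ :=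
  (evalO2 D (ω.nth (x.card - 1)) (ω'.nth (y.card - 1)) - D x y) *
    pathDelta ω x * pathDelta ω' y

/-- The covariant bidifference operator `∇_{ω,ω′} = D △_{ω,ω′} + α_{ω,ω′}`. -/
noncomputable def covBidiffOp {n : ℕ} (ω ω' : CausetPath n)
    (D f : Causet.Q n → Causet.Q n → ℂ) : Causet.Q n → Causet.Q n → ℂ :=
  fun x y => D x y * bidiffOp ω ω' f x y + alpha2Op ω ω' D x y * f x y

/-- The curvature operator `R_{ω,ω′} = ∇_{ω,ω′} - ∇_{ω′,ω}`. -/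
noncomputable def curvOp {n : ℕ} (ω ω' : CausetPath n)
    (D f : Causet.Q n → Causet.Q n → ℂ) : Causet.Q n → Causet.Q n → ℂ :=
  fun x y => covBidiffOp ω ω' D f x y - covBidiffOp ω' ω D f x y

/-- The metric operator `𝒟_{ω,ω′}`. -/
noncomputable def metricOp {n : ℕ} (ω ω' : CausetPath n)
    (D f : Causet.Q n → Causet.Q n → ℂ) : Causet.Q n → Causet.Q n → ℂ :=
  fun x y =>
    D x y *
      (evalO2 f (ω'.nth (x.card - 1)) (ω.nth (y.card - 1)) *
          pathDelta ω' x * pathDelta ω y -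
        evalO2 f (ω.nth (x.card - 1)) (ω'.nth (y.card - 1)) *
          pathDelta ω x * pathDelta ω' y)

/-- The mass-energy operator `𝒯_{ω,ω′}`. -/
noncomputable def massOp {n : ℕ} (ω ω' : CausetPath n)
    (D f : Causet.Q n → Causet.Q n → ℂ) : Causet.Q n → Causet.Q n → ℂ :=
  fun x y =>
    (evalO2 D (ω.nth (x.card - 1)) (ω'.nth (y.card - 1)) *
        pathDelta ω x * pathDelta ω' y -
      evalO2 D (ω'.nth (x.card - 1)) (ω.nth (y.card - 1)) *
        pathDelta ω' x * pathDelta ω y) * f x y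

/-- The standard inner product on `K_n = ℂ^{Q_n}`. -/
noncomputable def Kinner {n : ℕ} [Fintype (Causet.Q n)]
    (f g : Causet.Q n → ℂ) : ℂ :=
  ∑ x, (starRingEnd ℂ) (f x) * g x

/-- The standard inner product on `L_n = ℂ^{Q_n × Q_n}`. -/
noncomputable def Linner {n : ℕ} [Fintype (Causet.Q n)]
    (f g : Causet.Q n → Causet.Q n → ℂ) : ℂ :=
  ∑ x, ∑ y, (starRingEnd ℂ) (f x y) * g x y

/-- The standard basis vector `e_x` (with the convention `e_{ω_0} := 0`). -/
noncomputable def basisO {n : ℕ} : Option (Causet.Q n) → (Causet.Q n → ℂ)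
  | some x => fun y => if y = x then 1 else 0
  | none => 0

/-- The tensor product basis vector `e_x ⊗ e_y` (with the convention that any
factor involving `ω_0` or `ω′_0` is `0`). -/
noncomputable def basisO2 {n : ℕ} (o o' : Option (Causet.Q n)) :
    Causet.Q n → Causet.Q n → ℂ :=
  fun x y => basisO o x * basisO o' y
lemma CausetPath.nth_in {n : ℕ} (ω : CausetPath n) (k : ℕ) (hk1 : 1 ≤ k) (hkn : k ≤ n) :
    ω.nth k = some (ω.toFun ⟨k - 1, Nat.sub_one_lt_of_le hk1 hkn⟩) := by
  unfold CausetPath.nth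
  rw [dif_pos ⟨hk1, hkn⟩]

lemma CausetPath.card_node {n : ℕ} (ω : CausetPath n) (k : ℕ) (hk1 : 1 ≤ k) (hkn : k ≤ n) :
    (ω.toFun ⟨k - 1, Nat.sub_one_lt_of_le hk1 hkn⟩).card = k := by
  rw [ω.card_eq]; simp; omega

lemma pathDelta_node {n : ℕ} (ω : CausetPath n) (k : ℕ) (hk1 : 1 ≤ k) (hkn : k ≤ n) :
    pathDelta ω (ω.toFun ⟨k - 1, Nat.sub_one_lt_of_le hk1 hkn⟩) = 1 := by
  unfold pathDelta
  rw [ω.card_node k hk1 hkn, ω.nth_in k hk1 hkn, if_pos rfl]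

lemma mu_step_lt1 (k n : ℕ) (hk2 : 2 ≤ k) (hkn : k ≤ n) : k - 1 < n := by omega

lemma mu_step_lt2 (k n : ℕ) (hk2 : 2 ≤ k) (hkn : k ≤ n) : k - 2 < n := by omega

lemma mu_step {n : ℕ} (ω : CausetPath n) (μ α β : Causet.Q n → ℂ)
    (H : ∀ x : Causet.Q n,
      β x * (μ x - evalO μ (ω.nth (x.card - 1))) * pathDelta ω x + α x * μ x = 0)
    (k : ℕ) (hk2 : 2 ≤ k) (hkn : k ≤ n)
    (hβ : β (ω.toFun ⟨k - 1, mu_step_lt1 k n hk2 hkn⟩) ≠ 0)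
    (hμ : μ (ω.toFun ⟨k - 1, mu_step_lt1 k n hk2 hkn⟩) = 0) :
    μ (ω.toFun ⟨k - 2, mu_step_lt2 k n hk2 hkn⟩) = 0 := by
  have h := H (ω.toFun ⟨k - 1, by omega⟩)
  rw [pathDelta_node ω k (by omega) hkn, ω.card_node k (by omega) hkn, hμ,
    ω.nth_in (k - 1) (by omega) (by omega)] at h
  have he : (⟨k - 1 - 1, by omega⟩ : Fin n) = ⟨k - 2, by omega⟩ := by
    rw [Fin.mk_eq_mk]; omega
  rw [he] at h
  simp only [evalO] at h
  have h2 : β (ω.toFun ⟨k - 1, by omega⟩) * μ (ω.toFun ⟨k - 2, by omega⟩) = 0 := by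
    ring_nf at h ⊢
    linear_combination -h
  rcases mul_eq_zero.mp h2 with h3 | h3
  · exact absurd h3 hβ
  · exact h3

/-- propagation of zeros of `μ` along the path for the equation
`β(x)[μ(x) - μ(ω_{|x|-1})] δ_{x,ω_{|x|}} + α(x) μ(x) = 0`, the resulting
nonvanishing of `μ` on the path, and the consequence that `β` must vanish
where `μ` vanishes (at path points) if such an `α` exists for arbitrary `μ`. -/
theorem mu_zero_propagation {n : ℕ} (hn : 1 ≤ n) (ω : CausetPath n)
    (μ α β : Causet.Q n → ℂ)
    (H : ∀ x : Causet.Q n,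
      β x * (μ x - evalO μ (ω.nth (x.card - 1))) * pathDelta ω x +
        α x * μ x = 0) :
    (∀ (k : ℕ) (hk1 : 1 ≤ k) (hkn : k ≤ n),
      μ (ω.toFun ⟨k - 1, by omega⟩) = 0 →
      (∀ (j : ℕ) (hj2 : 2 ≤ j) (hjk : j ≤ k), β (ω.toFun ⟨j - 1, by omega⟩) ≠ 0) →
      ∀ (j : ℕ) (hj1 : 1 ≤ j) (hjk : j ≤ k), μ (ω.toFun ⟨j - 1, by omega⟩) = 0) ∧
    ((∀ (j : ℕ) (hj1 : 1 ≤ j) (hjn : j ≤ n), β (ω.toFun ⟨j - 1, by omega⟩) ≠ 0) →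
      μ (ω.toFun ⟨0, by omega⟩) ≠ 0 →
      ∀ (k : ℕ) (hk1 : 1 ≤ k) (hkn : k ≤ n), μ (ω.toFun ⟨k - 1, by omega⟩) ≠ 0) ∧
    (∀ (k : ℕ) (hk2 : 2 ≤ k) (hkn : k ≤ n),
      (∀ μ' : Causet.Q n → ℂ, ∃ α' : Causet.Q n → ℂ,
        ∀ x : Causet.Q n,
          β x * (μ' x - evalO μ' (ω.nth (x.card - 1))) * pathDelta ω x +
            α' x * μ' x = 0) →
      μ (ω.toFun ⟨k - 1, by omega⟩) = 0 → β (ω.toFun ⟨k - 1, by omega⟩) = 0) := by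
  refine ⟨?_, ?_, ?_⟩
  · intro k hk1 hkn hμk hβ
    have key : ∀ d j (hj1 : 1 ≤ j) (hjk : j ≤ k) (hd : k - j = d), μ (ω.toFun ⟨j - 1, by omega⟩) = 0 := by
      intro d
      induction d with
      | zero =>
        intro j hj1 hjk hd
        have : j = k := by omega
        subst this
        exact hμk
      | succ d ih =>
        intro j hj1 hjk hd
        have h1 : μ (ω.toFun ⟨(j + 1) - 1, by omega⟩) = 0 := ih (j + 1) (by omega) (by omega) (by omega)
        have h2 := mu_step ω μ α β H (j + 1) (by omega) (by omega)
          (hβ (j + 1) (by omega) (by omega)) h1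
        have he : (⟨j + 1 - 2, by omega⟩ : Fin n) = ⟨j - 1, by omega⟩ := by
          rw [Fin.mk_eq_mk]; omega
        rwa [he] at h2
    intro j hj1 hjk
    exact key (k - j) j hj1 hjk rfl
  · intro hβ hμ1 k hk1 hkn hμk
    have h1 : μ (ω.toFun ⟨1 - 1, by omega⟩) = 0 := by
      refine ?_
      have := (fun (j : ℕ) (hj2 : 2 ≤ j) (hjk : j ≤ k) => hβ j (by omega) (by omega))
      -- use part 1 directly; re-derive
      have key : ∀ d j (hj1 : 1 ≤ j) (hjk : j ≤ k) (hd : k - j = d), μ (ω.toFun ⟨j - 1, by omega⟩) = 0 := by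
        intro d
        induction d with
        | zero =>
          intro j hj1 hjk hd
          have : j = k := by omega
          subst this
          exact hμk
        | succ d ih =>
          intro j hj1 hjk hd
          have h1 : μ (ω.toFun ⟨(j + 1) - 1, by omega⟩) = 0 := ih (j + 1) (by omega) (by omega) (by omega)
          have h2 := mu_step ω μ α β H (j + 1) (by omega) (by omega)
            (hβ (j + 1) (by omega) (by omega)) h1
          have he : (⟨j + 1 - 2, by omega⟩ : Fin n) = ⟨j - 1, by omega⟩ := by
            rw [Fin.mk_eq_mk]; omega
          rwa [he] at h2
      exact key (k - 1) 1 le_rfl hk1 rfl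
    exact hμ1 h1
  · intro k hk2 hkn hex _
    obtain ⟨α', hα'⟩ := hex (fun x => if x = ω.toFun ⟨k - 2, by omega⟩ then 1 else 0)
    have h := hα' (ω.toFun ⟨k - 1, by omega⟩)
    rw [pathDelta_node ω k (by omega) hkn, ω.card_node k (by omega) hkn,
      ω.nth_in (k - 1) (by omega) (by omega)] at h
    have he : (⟨k - 1 - 1, by omega⟩ : Fin n) = ⟨k - 2, by omega⟩ := by
      rw [Fin.mk_eq_mk]; omega
    rw [he] at h
    simp only [evalO] at h
    have hne : ω.toFun ⟨k - 1, by omega⟩ ≠ ω.toFun ⟨k - 2, by omega⟩ := by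
      intro hc
      have h1 := ω.card_eq ⟨k - 1, by omega⟩
      have h2 := ω.card_eq ⟨k - 2, by omega⟩
      rw [hc] at h1
      simp [Causet.Q.card] at h1 h2
      omega
    rw [if_neg hne] at h
    simp at h
    simpa using h
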